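/- Let G be a finite graph with acyclic orientation ω. A subset J ⊆ V is an order ideal of P(G, ω') for some ω' torically equivalent to ω if and only if its complement V − J is an order ideal of P(G, ω'') for some ω'' torically equivalent to ω. -/
import Mathlib

/-- A directed cycle (closed directed walk with at least one edge). -/
def HasCycle {α : Type*} (r : α → α → Prop) : Prop :=
  ∃ (n : ℕ) (f : Fin (n + 1) → α),
    (∀ i : Fin n, r (f i.castSucc) (f i.succ)) ∧ r (f (Fin.last n)) (f 0)

/-- `r` is an orientation of the simple graph `G`: each edge gets exactly one
direction. -/
def IsOrientation {V : Type*} (G : SimpleGraph V) (r : V → V → Prop) : Prop :=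
  (∀ i j : V, G.Adj i j ↔ (r i j ∨ r j i)) ∧ ∀ i j : V, r i j → ¬ r j i

/-- The orientation obtained from `r` by reversing all edges incident to `v`. -/
def flipAt {V : Type*} (r : V → V → Prop) (v : V) : V → V → Prop :=
  fun i j => ((i = v ∨ j = v) ∧ r j i) ∨ (¬(i = v ∨ j = v) ∧ r i j)

/-- A single source-to-sink flipAt: flipping at a source vertex. -/
def FlipStep {V : Type*} (r r' : V → V → Prop) : Prop :=
  ∃ v : V, (∀ u : V, ¬ r u v) ∧ r' = flipAt r v

/-- Toric equivalence: generated by source-to-sink flips. -/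
def ToricEquiv {V : Type*} (r r' : V → V → Prop) : Prop :=
  Relation.ReflTransGen FlipStep r r'

/-- `I` is an order ideal (down-closed set) of the reachability poset of `r`. -/
def IsIdealOf {V : Type*} (r : V → V → Prop) (I : Set V) : Prop :=
  ∀ x y : V, Relation.ReflTransGen r x y → y ∈ I → x ∈ I

/-- `J` is an order filter (up-closed set) of the reachability poset of `r`. -/
def IsFilterOf {V : Type*} (r : V → V → Prop) (J : Set V) : Prop :=
  ∀ x y : V, Relation.ReflTransGen r x y → x ∈ J → y ∈ J

section Aux

variable {V : Type}

/-- Flip all pairs with exactly one endpoint in `S`. -/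
def relFlip (r : V → V → Prop) (S : Set V) : V → V → Prop :=
  fun i j => (((i ∈ S) ↔ (j ∈ S)) ∧ r i j) ∨ (¬((i ∈ S) ↔ (j ∈ S)) ∧ r j i)

lemma relFlip_empty (r : V → V → Prop) : relFlip r (∅ : Set V) = r := by
  funext i j; simp [relFlip]

lemma flipAt_out (r : V → V → Prop) (v : V) (hv : ∀ u, ¬ r u v) (j : V) :
    ¬ flipAt r v v j := by
  rintro (⟨_, h⟩ | ⟨h, _⟩)
  · exact hv j h
  · exact h (Or.inl rfl)

lemma flipAt_acyclic (r : V → V → Prop) (v : V) (hv : ∀ u, ¬ r u v)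
    (h : ¬ HasCycle r) : ¬ HasCycle (flipAt r v) := by
  rintro ⟨n, f, hchain, hclose⟩
  have hout : ∀ i : Fin (n+1), ∃ j : Fin (n+1), flipAt r v (f i) (f j) := by
    intro i
    by_cases hi : (i : ℕ) < n
    · refine ⟨(⟨i, hi⟩ : Fin n).succ, ?_⟩
      exact hchain ⟨i, hi⟩
    · have : i = Fin.last n := by
        ext; exact Nat.le_antisymm (Nat.lt_succ_iff.mp i.isLt) (Nat.not_lt.mp hi)
      subst this; exact ⟨0, hclose⟩
  have hne : ∀ i, f i ≠ v := by
    intro i hi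
    obtain ⟨j, hj⟩ := hout i
    rw [hi] at hj
    exact flipAt_out r v hv _ hj
  apply h
  refine ⟨n, f, fun i => ?_, ?_⟩
  · rcases hchain i with (⟨hc, _⟩ | ⟨_, h2⟩)
    · rcases hc with hc | hc
      · exact absurd hc (hne _)
      · exact absurd hc (hne _)
    · exact h2
  · rcases hclose with (⟨hc, _⟩ | ⟨_, h2⟩)
    · rcases hc with hc | hc
      · exact absurd hc (hne _)
      · exact absurd hc (hne _)
    · exact h2

lemma toric_acyclic {r r' : V → V → Prop} (h : ToricEquiv r r') (hr : ¬ HasCycle r) :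
    ¬ HasCycle r' := by
  induction h with
  | refl => exact hr
  | tail _ hstep ih =>
      obtain ⟨v, hv, rfl⟩ := hstep
      exact flipAt_acyclic _ v hv ih

lemma exists_source [Fintype V] {r : V → V → Prop} (hacyc : ¬ HasCycle r)
    {A : Finset V} (hne : A.Nonempty) (hid : IsIdealOf r ↑A) :
    ∃ v ∈ A, ∀ u, ¬ r u v := by
  by_contra hcon
  push_neg at hcon
  have hg : ∀ v : {x // x ∈ A}, ∃ u : {x // x ∈ A}, r ↑u ↑v := by
    rintro ⟨v, hvA⟩
    obtain ⟨u, hu⟩ := hcon v hvA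
    exact ⟨⟨u, hid u v (Relation.ReflTransGen.single hu) hvA⟩, hu⟩
  choose g hgr using hg
  obtain ⟨a0, ha0⟩ := hne
  set a : {x // x ∈ A} := ⟨a0, ha0⟩ with ha
  have key : ∀ m k : ℕ, m < k → g^[m] a = g^[k] a → False := by
    intro m k hmk heq
    set d := k - m - 1 with hd
    apply hacyc
    refine ⟨d, fun i => ((g^[k - i.val] a : {x // x ∈ A}) : V), ?_, ?_⟩
    · intro i
      have hi : (i : ℕ) < d := i.isLt
      have h1 : k - (i.castSucc : ℕ) = (k - ((i.succ : Fin (d+1)) : ℕ)) + 1 := by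
        simp only [Fin.coe_castSucc, Fin.val_succ]
        omega
      show r ((g^[k - (i.castSucc : ℕ)] a : {x // x ∈ A}) : V)
        ((g^[k - ((i.succ : Fin (d+1)) : ℕ)] a : {x // x ∈ A}) : V)
      rw [h1, Function.iterate_succ_apply']
      exact hgr _
    · have h2 : k - ((Fin.last d : Fin (d+1)) : ℕ) = m + 1 := by
        simp only [Fin.val_last]
        omega
      have h3 : k - ((0 : Fin (d+1)) : ℕ) = k := by simp
      show r ((g^[k - ((Fin.last d : Fin (d+1)) : ℕ)] a : {x // x ∈ A}) : V)
        ((g^[k - ((0 : Fin (d+1)) : ℕ)] a : {x // x ∈ A}) : V)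
      rw [h2, h3, ← heq, Function.iterate_succ_apply']
      exact hgr _
  obtain ⟨m, k, hmk, heq⟩ := Finite.exists_ne_map_eq_of_infinite (fun n : ℕ => g^[n] a)
  rcases hmk.lt_or_gt with h | h
  · exact key m k h heq
  · exact key k m h heq.symm

lemma relFlip_flipAt (r : V → V → Prop) (S : Set V) (v : V) (hv : v ∈ S) :
    relFlip (flipAt r v) (S \ {v}) = relFlip r S := by
  funext i j
  apply propext
  by_cases hi : i = v <;> by_cases hj : j = v <;>
    by_cases hiS : i ∈ S <;> by_cases hjS : j ∈ S <;>
      simp [relFlip, flipAt, hi, hj, hiS, hjS, hv] <;> tauto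

lemma ideal_flipAt {r : V → V → Prop} {A : Set V} {v : V}
    (hv : ∀ u, ¬ r u v) (hid : IsIdealOf r A) :
    IsIdealOf (flipAt r v) (A \ {v}) := by
  have key : ∀ x y : V, Relation.ReflTransGen (flipAt r v) x y → y ≠ v →
      Relation.ReflTransGen r x y ∧ x ≠ v := by
    intro x y hxy
    induction hxy using Relation.ReflTransGen.head_induction_on with
    | refl => exact fun hy => ⟨Relation.ReflTransGen.refl, hy⟩
    | head hstep _ ih =>
        intro hy
        obtain ⟨hch, hbne⟩ := ih hy
        rcases hstep with (⟨hc, h2⟩ | ⟨hc, h2⟩)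
        · rcases hc with hc | hc
          · subst hc; exact absurd h2 (hv _)
          · exact absurd hc hbne
        · exact ⟨Relation.ReflTransGen.head h2 hch, fun hx => hc (Or.inl hx)⟩
  intro x y hxy hy
  obtain ⟨hrxy, hxne⟩ := key x y hxy hy.2
  exact ⟨hid x y hrxy hy.1, hxne⟩

lemma main_flip [Fintype V] : ∀ (n : ℕ) (r : V → V → Prop) (A : Finset V), A.card = n →
    ¬ HasCycle r → IsIdealOf r ↑A → ToricEquiv r (relFlip r ↑A) := by
  classical
  intro n
  induction n with
  | zero =>
      intro r A hcard _ _
      rw [Finset.card_eq_zero] at hcard; subst hcard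
      rw [Finset.coe_empty, relFlip_empty]
      exact Relation.ReflTransGen.refl
  | succ n ih =>
      intro r A hcard hacyc hid
      have hne : A.Nonempty := Finset.card_pos.mp (by omega)
      obtain ⟨v, hvA, hv⟩ := exists_source hacyc hne hid
      have hstep : FlipStep r (flipAt r v) := ⟨v, hv, rfl⟩
      have hacyc2 := flipAt_acyclic r v hv hacyc
      have hid2 : IsIdealOf (flipAt r v) ↑(A.erase v) := by
        rw [Finset.coe_erase]
        exact ideal_flipAt hv hid
      have hcard2 : (A.erase v).card = n := by
        rw [Finset.card_erase_of_mem hvA, hcard]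
        omega
      have h := ih (flipAt r v) (A.erase v) hcard2 hacyc2 hid2
      rw [Finset.coe_erase, relFlip_flipAt r ↑A v (by exact_mod_cast hvA)] at h
      exact Relation.ReflTransGen.head hstep h

lemma compl_ideal {r : V → V → Prop} {J : Set V} (hid : IsIdealOf r J) :
    IsIdealOf (relFlip r J) Jᶜ := by
  have step : ∀ a b : V, relFlip r J a b → b ∉ J → a ∉ J := by
    intro a b hab hb ha
    rcases hab with ⟨hiff, _⟩ | ⟨_, h⟩
    · exact hb (hiff.mp ha)
    · exact hb (hid b a (Relation.ReflTransGen.single h) ha)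
  intro x y hxy hy
  induction hxy using Relation.ReflTransGen.head_induction_on with
  | refl => exact hy
  | head h _ ih => exact step _ _ h ih

lemma forward_dir [Fintype V] {r : V → V → Prop} (hacyc : ¬ HasCycle r) {J : Set V} :
    (∃ r' : V → V → Prop, ToricEquiv r r' ∧ IsIdealOf r' J) →
    ∃ r'' : V → V → Prop, ToricEquiv r r'' ∧ IsIdealOf r'' Jᶜ := by
  classical
  rintro ⟨r', htor, hid⟩
  have hacyc' := toric_acyclic htor hacyc
  have hJfin : J.Finite := Set.toFinite J
  have hJ : (↑hJfin.toFinset : Set V) = J := hJfin.coe_toFinset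
  have hm := main_flip hJfin.toFinset.card r' hJfin.toFinset rfl hacyc'
    (by rw [hJ]; exact hid)
  rw [hJ] at hm
  exact ⟨relFlip r' J, htor.trans hm, compl_ideal hid⟩

end Aux

/-- J is an order ideal of P(G,ω') for some ω' torically equivalent to ω
iff its complement V − J is an order ideal of P(G,ω'') for some ω'' torically
equivalent to ω. -/
theorem stmt_12 (V : Type) [Fintype V] (G : SimpleGraph V) (r : V → V → Prop)
    (hor : IsOrientation G r) (hacyc : ¬ HasCycle r) (J : Set V) :
    (∃ r' : V → V → Prop, ToricEquiv r r' ∧ IsIdealOf r' J) ↔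
      (∃ r'' : V → V → Prop, ToricEquiv r r'' ∧ IsIdealOf r'' Jᶜ) := by
  constructor
  · exact forward_dir hacyc
  · intro h
    have := forward_dir hacyc h
    rwa [compl_compl] at this
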